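/- Let k be any index attaining the maximum of the ratios, i.e., u_k = max_i u_i. Then (min_{j ≠ k} v̂_k A_{k,j} v̂_j) · ∑_{j ≠ k} (u_j − min_i u_i) ≤ 2ε · min_i u_i. -/

import Mathlib

open Finset

/-- If `k` attains the maximum of the ratios `u i = v i / v̂ i`, then
`(min_{j ≠ k} v̂_k A_{k,j} v̂_j) · ∑_{j ≠ k} (u_j − min_i u_i) ≤ 2ε · min_i u_i`. -/
theorem max_index_sum_bound
    {n : ℕ} (hn : 3 ≤ n)
    (A : Fin n → Fin n → ℝ)
    (hA_symm : ∀ i j, A i j = A j i)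
    (hA_nonneg : ∀ i j, 0 ≤ A i j)
    (hA_diag : ∀ i, A i i = 0)
    (hA_offdiag : ∀ i j, i ≠ j → 0 < A i j)
    (v : Fin n → ℝ) (hv : ∀ i, 0 < v i)
    (hds : ∀ i, ∑ j, v i * A i j * v j = 1)
    (ε : ℝ) (hε0 : 0 < ε) (hε1 : ε < 1)
    (vh : Fin n → ℝ) (hvh : ∀ i, 0 < vh i)
    (happrox : ∀ i, |∑ j, vh i * A i j * vh j - 1| ≤ ε)
    (k : Fin n) (hk : ∀ i, v i / vh i ≤ v k / vh k) :
    (Finset.inf' (Finset.univ.filter (fun j : Fin n => j ≠ k))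
        ⟨_, Finset.mem_filter.mpr ⟨Finset.mem_univ _,
          (Classical.choose_spec
            (@exists_ne (Fin n) (Fin.nontrivial_iff_two_le.mpr (by omega)) k))⟩⟩
        (fun j => vh k * A k j * vh j)) *
      (∑ j ∈ Finset.univ.filter (fun j : Fin n => j ≠ k),
        (v j / vh j -
          Finset.inf' Finset.univ ⟨⟨0, by omega⟩, Finset.mem_univ _⟩
            (fun i => v i / vh i))) ≤
    2 * ε *
      Finset.inf' Finset.univ ⟨⟨0, by omega⟩, Finset.mem_univ _⟩
        (fun i => v i / vh i) := by
  haveI : Nontrivial (Fin n) := Fin.nontrivial_iff_two_le.mpr (by omega)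
  have h0 : (Finset.univ : Finset (Fin n)).Nonempty := Finset.univ_nonempty
  have u : Fin n → ℝ := fun i => v i / vh i
  set s : Finset (Fin n) := Finset.univ.filter (fun j => j ≠ k) with hs
  have hs_ne : s.Nonempty := by
    obtain ⟨j, hj⟩ := exists_ne k
    exact ⟨j, by simp [hs, hj]⟩
  set w : Fin n → Fin n → ℝ := fun i j => vh i * A i j * vh j with hw
  set uu : Fin n → ℝ := fun i => v i / vh i with hu
  set m : ℝ := Finset.inf' Finset.univ h0 uu with hm
  set μ : ℝ := Finset.inf' s hs_ne (w k) with hmu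
  show μ * (∑ j ∈ s, (uu j - m)) ≤ 2 * ε * m
  -- basic positivity
  have hvhne : ∀ i, vh i ≠ 0 := fun i => (hvh i).ne'
  have hu_pos : ∀ i, 0 < uu i := fun i => div_pos (hv i) (hvh i)
  have hm_le : ∀ i, m ≤ uu i := fun i => Finset.inf'_le uu (Finset.mem_univ i)
  obtain ⟨i0, -, hi0⟩ := Finset.exists_mem_eq_inf' h0 uu
  have hmeq : m = uu i0 := by rw [hm, hi0]
  have hm_pos : 0 < m := hmeq ▸ hu_pos i0
  have hM : ∀ j, uu j ≤ uu k := fun j => hk j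
  have hμ_le : ∀ j ∈ s, μ ≤ w k j := fun j hj => Finset.inf'_le _ hj
  have hμ_pos : 0 < μ := by
    rw [hmu, Finset.lt_inf'_iff]
    intro j hj
    have hjk : j ≠ k := (Finset.mem_filter.mp hj).2
    exact mul_pos (mul_pos (hvh k) (hA_offdiag k j (Ne.symm hjk))) (hvh j)
  -- key identity
  have key : ∀ i : Fin n, ∑ j, uu i * w i j * uu j = 1 := by
    intro i
    rw [← hds i]
    refine Finset.sum_congr rfl fun j _ => ?_
    simp only [hu, hw]
    have h1 := hvhne i
    have h2 := hvhne j
    field_simp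
  -- bounds on row sums of w
  have hS : ∀ i : Fin n, 1 - ε ≤ ∑ j, w i j ∧ ∑ j, w i j ≤ 1 + ε := by
    intro i
    have h := abs_le.mp (happrox i)
    simp only [hw]
    constructor <;> linarith [h.1, h.2]
  -- restrict sums to s using w k k = 0
  have hwkk : w k k = 0 := by simp [hw, hA_diag k]
  have hsum_split : ∀ f : Fin n → ℝ, f k = 0 → ∑ j, f j = ∑ j ∈ s, f j := by
    intro f hf
    rw [hs, Finset.filter_ne']
    exact (Finset.sum_erase _ hf).symm
  set T : ℝ := ∑ j ∈ s, (uu j - m) with hT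
  have hT0 : 0 ≤ T := Finset.sum_nonneg fun j _ => by linarith [hm_le j]
  -- inequality 1 : u k * ((1-ε)*m + μ*T) ≤ 1
  have h1 : uu k * ((1 - ε) * m + μ * T) ≤ 1 := by
    have e1 : ∑ j, uu k * w k j * uu j
        = uu k * ((∑ j, w k j) * m + ∑ j ∈ s, w k j * (uu j - m)) := by
      rw [← hsum_split (fun j => w k j * (uu j - m)) (by simp [hwkk])]
      rw [Finset.sum_mul, ← Finset.sum_add_distrib, Finset.mul_sum]
      exact Finset.sum_congr rfl fun j _ => by ring
    have e2 : μ * T ≤ ∑ j ∈ s, w k j * (uu j - m) := by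
      rw [hT, Finset.mul_sum]
      refine Finset.sum_le_sum fun j hj => ?_
      exact mul_le_mul_of_nonneg_right (hμ_le j hj) (by linarith [hm_le j])
    have e3 : (1 - ε) * m ≤ (∑ j, w k j) * m :=
      mul_le_mul_of_nonneg_right (hS k).1 hm_pos.le
    calc uu k * ((1 - ε) * m + μ * T)
        ≤ uu k * ((∑ j, w k j) * m + ∑ j ∈ s, w k j * (uu j - m)) := by
          apply mul_le_mul_of_nonneg_left (by linarith) (hu_pos k).le
      _ = 1 := by rw [← e1, key k]
  -- inequality 2 : 1 ≤ m * u k * (1+ε)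
  have h2 : 1 ≤ m * uu k * (1 + ε) := by
    have hw_nonneg : ∀ i j, 0 ≤ w i j := fun i j =>
      mul_nonneg (mul_nonneg (hvh i).le (hA_nonneg i j)) (hvh j).le
    have e1 : ∑ j, uu i0 * w i0 j * uu j ≤ ∑ j, m * w i0 j * uu k := by
      refine Finset.sum_le_sum fun j _ => ?_
      rw [hmeq]
      nlinarith [mul_nonneg (mul_nonneg (hu_pos i0).le (hw_nonneg i0 j))
        (sub_nonneg.mpr (hM j))]
    have e2 : ∑ j, m * w i0 j * uu k = m * uu k * ∑ j, w i0 j := by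
      rw [Finset.mul_sum]
      exact Finset.sum_congr rfl fun j _ => by ring
    have e3 : m * uu k * ∑ j, w i0 j ≤ m * uu k * (1 + ε) :=
      mul_le_mul_of_nonneg_left (hS i0).2 (mul_pos hm_pos (hu_pos k)).le
    calc (1 : ℝ) = ∑ j, uu i0 * w i0 j * uu j := (key i0).symm
      _ ≤ ∑ j, m * w i0 j * uu k := e1
      _ = m * uu k * ∑ j, w i0 j := e2
      _ ≤ m * uu k * (1 + ε) := e3
  -- conclude
  have hMpos : 0 < uu k := hu_pos k
  nlinarith [mul_pos hMpos hm_pos, h1, h2]
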